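/- Let g and h be normalized arithmetic functions with g(n) > 0 and h(n) > 0 for all n ≥ 1, and let a_{n,m} denote the coefficient of x^m in P_n^{g,h}(x). If g(2)^2 > g(3), then for all n ≥ 2, a_{n,n−1}^2 > a_{n,n−2} · a_{n,n}. -/

import Mathlib

open Finset Polynomial

/-- The recursively defined polynomials `P_n^{g,h}` attached to arithmetic functions
`g, h : ℕ → ℝ` (values at `0` are irrelevant): `P_0 = 1` and
`P_n(x) = (x / h(n)) · Σ_{k=1}^n g(k) · P_{n-k}(x)`. -/
noncomputable def Ppoly (g h : ℕ → ℝ) : ℕ → Polynomial ℝ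
  | 0 => 1
  | (n+1) => Polynomial.C (h (n+1))⁻¹ * Polynomial.X *
      ∑ k ∈ Finset.range (n+1), Polynomial.C (g (k+1)) * Ppoly g h (n - k)
  termination_by n => n
  decreasing_by all_goals (simp_wf; try omega)

/-- `A_{n,m}^{g,h}`: the coefficient of `x^m` in `(∏_{k=1}^n h(k)) · P_n^{g,h}(x)`. -/
noncomputable def Acoeff (g h : ℕ → ℝ) (n m : ℕ) : ℝ :=
  (∏ k ∈ Finset.Icc 1 n, h k) * (Ppoly g h n).coeff m

/-- `h` extended by the convention `h(0) := 0`. -/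
noncomputable def hExt (h : ℕ → ℝ) (n : ℕ) : ℝ := if n = 0 then 0 else h n

/-- `h_m(n) = ∏_{k=0}^{m-1} h(n-k)` (with the convention `h(0) := 0`). -/
noncomputable def hIter (h : ℕ → ℝ) (m n : ℕ) : ℝ :=
  ∏ k ∈ Finset.range m, hExt h (n - k)

/-- Helper for `H(μ,n)`: defined on reversed compositions, peeling off the head
(which is the last part `μ_{r+1}` of the original composition). -/
noncomputable def Hrev (h : ℕ → ℝ) : List ℕ → ℕ → ℝ
  | [], _ => 1
  | (a :: t), n =>
      if n < (a :: t).sum + (a :: t).length then 0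
      else ∑ k ∈ Finset.Ico ((a :: t).sum + (a :: t).length - 1) n,
        hIter h a k * Hrev h t (k - a)

/-- `H(μ, n)` for a composition `μ` (a list of positive integers): `H(ε,n) = 1`,
`H(μ,n) = Σ_{k=|μ|+ℓ(μ)-1}^{n-1} h_{μ_{r+1}}(k) · H((μ_1,…,μ_r), k - μ_{r+1})`
if `n ≥ |μ| + ℓ(μ)`, and `0` otherwise. -/
noncomputable def HFun (h : ℕ → ℝ) (μ : List ℕ) (n : ℕ) : ℝ := Hrev h μ.reverse n

/-- `𝓗(μ, n) = Σ_{λ ∈ Orb(μ)} H(λ, n)`: sum over all distinct rearrangements of `μ`. -/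
noncomputable def HCal (h : ℕ → ℝ) (μ : List ℕ) (n : ℕ) : ℝ :=
  ∑ lam ∈ μ.permutations.toFinset, HFun h lam n

/-- `𝓖(μ) = ∏_{k=1}^{ℓ(μ)} g(μ_k + 1)`. -/
noncomputable def GCal (g : ℕ → ℝ) (μ : List ℕ) : ℝ := (μ.map (fun p => g (p + 1))).prod

/-- leading coefficient normalizer `c n = ∏_{j=1}^n h(j)⁻¹`. -/
noncomputable def ccAux (h : ℕ → ℝ) : ℕ → ℝ
  | 0 => 1
  | n+1 => (h (n+1))⁻¹ * ccAux h n

/-- `S n = Σ_{j=1}^n h(j)`. -/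
noncomputable def SsumAux (h : ℕ → ℝ) (n : ℕ) : ℝ := ∑ j ∈ Finset.range n, h (j+1)

/-- `E n`: the normalized third-highest coefficient of `P_{n+2}`. -/
noncomputable def EEAux (g h : ℕ → ℝ) : ℕ → ℝ
  | 0 => 0
  | n+1 => EEAux g h n + h (n+2) * (g 2 ^ 2 * SsumAux h n + g 3 * h (n+1))

lemma ppoly_coeff_succ (g h : ℕ → ℝ) (n m : ℕ) :
    (Ppoly g h (n+1)).coeff (m+1) =
      (h (n+1))⁻¹ * ∑ k ∈ Finset.range (n+1), g (k+1) * (Ppoly g h (n-k)).coeff m := by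
  rw [Ppoly, mul_assoc, Polynomial.coeff_C_mul, Polynomial.coeff_X_mul,
    Polynomial.finset_sum_coeff]
  simp only [Polynomial.coeff_C_mul]

lemma ppoly_coeff_zero (g h : ℕ → ℝ) (n : ℕ) : (Ppoly g h (n+1)).coeff 0 = 0 := by
  rw [Ppoly, mul_assoc, Polynomial.coeff_C_mul]
  simp [Polynomial.mul_coeff_zero]

lemma ppoly_coeff_eq_zero (g h : ℕ → ℝ) : ∀ n m : ℕ, n < m → (Ppoly g h n).coeff m = 0 := by
  intro n
  induction n using Nat.strong_induction_on with
  | _ n ih =>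
    intro m hm
    match n, m with
    | 0, m =>
        have : (Ppoly g h 0) = 1 := by rw [Ppoly]
        rw [this, Polynomial.coeff_one]
        simp; omega
    | n+1, m+1 =>
        rw [ppoly_coeff_succ]
        have : ∀ k ∈ Finset.range (n+1), g (k+1) * (Ppoly g h (n-k)).coeff m = 0 := by
          intro k hk
          rw [ih (n-k) (by omega) m (by omega), mul_zero]
        rw [Finset.sum_congr rfl this]
        simp

lemma ccAux_pos (h : ℕ → ℝ) (hh : ∀ k, 1 ≤ k → 0 < h k) (n : ℕ) : 0 < ccAux h n := by
  induction n with
  | zero => norm_num [ccAux]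
  | succ n ih =>
      rw [ccAux]
      exact mul_pos (inv_pos.mpr (hh (n+1) (by omega))) ih

lemma SsumAux_nonneg (h : ℕ → ℝ) (hh : ∀ k, 1 ≤ k → 0 < h k) (n : ℕ) : 0 ≤ SsumAux h n := by
  apply Finset.sum_nonneg
  intro j _
  exact (hh (j+1) (by omega)).le

lemma ppoly_coeff_top (g h : ℕ → ℝ) (hg1 : g 1 = 1) (n : ℕ) :
    (Ppoly g h n).coeff n = ccAux h n := by
  induction n with
  | zero =>
      have : (Ppoly g h 0) = 1 := by rw [Ppoly]
      simp [this, ccAux]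
  | succ n ih =>
      rw [ppoly_coeff_succ]
      rw [Finset.sum_eq_single_of_mem 0 (Finset.mem_range.mpr (by omega))]
      · simp only [Nat.sub_zero, hg1, one_mul, ih]
        rw [ccAux]
      · intro k hk hk0
        have hk' := Finset.mem_range.mp hk
        rw [ppoly_coeff_eq_zero g h (n-k) n (by omega), mul_zero]

lemma ppoly_coeff_sub1 (g h : ℕ → ℝ) (hg1 : g 1 = 1)
    (hh : ∀ k, 1 ≤ k → 0 < h k) (n : ℕ) :
    (Ppoly g h (n+1)).coeff n = g 2 * SsumAux h n * ccAux h (n+1) := by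
  induction n with
  | zero => simp [ppoly_coeff_zero, SsumAux]
  | succ n ih =>
      rw [ppoly_coeff_succ, Finset.sum_range_succ', Finset.sum_range_succ']
      have htail : ∀ k ∈ Finset.range n,
          g (k+1+1+1) * (Ppoly g h (n+1-(k+1+1))).coeff n = 0 := by
        intro k hk
        have hk' := Finset.mem_range.mp hk
        rw [ppoly_coeff_eq_zero g h _ n (by omega), mul_zero]
      rw [Finset.sum_congr rfl htail, Finset.sum_const_zero]
      norm_num
      rw [ih, hg1, ppoly_coeff_top g h hg1]
      have hccs : ccAux h (n+2) = (h (n+2))⁻¹ * ccAux h (n+1) := by rw [ccAux]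
      have hccn : ccAux h (n+1) = (h (n+1))⁻¹ * ccAux h n := by rw [ccAux]
      have hS : SsumAux h (n+1) = SsumAux h n + h (n+1) := by
        rw [SsumAux, Finset.sum_range_succ]; rfl
      have hne : h (n+1) ≠ 0 := (hh (n+1) (by omega)).ne'
      rw [hccs, hS, hccn]
      field_simp
      ring

lemma ppoly_coeff_sub2 (g h : ℕ → ℝ) (hg1 : g 1 = 1)
    (hh : ∀ k, 1 ≤ k → 0 < h k) (n : ℕ) :
    (Ppoly g h (n+2)).coeff n = EEAux g h n * ccAux h (n+2) := by
  induction n with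
  | zero => simp [ppoly_coeff_zero, EEAux]
  | succ n ih =>
      rw [ppoly_coeff_succ, Finset.sum_range_succ', Finset.sum_range_succ',
        Finset.sum_range_succ']
      have htail : ∀ k ∈ Finset.range n,
          g (k+1+1+1+1) * (Ppoly g h (n+2-(k+1+1+1))).coeff n = 0 := by
        intro k hk
        have hk' := Finset.mem_range.mp hk
        rw [ppoly_coeff_eq_zero g h _ n (by omega), mul_zero]
      rw [Finset.sum_congr rfl htail, Finset.sum_const_zero]
      norm_num
      rw [ih, hg1, ppoly_coeff_sub1 g h hg1 hh, ppoly_coeff_top g h hg1]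
      have hccs : ccAux h (n+3) = (h (n+3))⁻¹ * ccAux h (n+2) := by rw [ccAux]
      have hcc2 : ccAux h (n+2) = (h (n+2))⁻¹ * ccAux h (n+1) := by rw [ccAux]
      have hcc1 : ccAux h (n+1) = (h (n+1))⁻¹ * ccAux h n := by rw [ccAux]
      have hE : EEAux g h (n+1) =
          EEAux g h n + h (n+2) * (g 2 ^ 2 * SsumAux h n + g 3 * h (n+1)) := by rw [EEAux]
      have hne1 : h (n+1) ≠ 0 := (hh (n+1) (by omega)).ne'
      have hne2 : h (n+2) ≠ 0 := (hh (n+2) (by omega)).ne'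
      have m1 : ccAux h n = h (n+1) * ccAux h (n+1) := by
        rw [hcc1]; field_simp
      have m2 : ccAux h (n+1) = h (n+2) * ccAux h (n+2) := by
        rw [hcc2]; field_simp
      rw [hE, hccs, m1, m2]
      ring

lemma key_ineq (g h : ℕ → ℝ) (hg2 : 0 < g 2) (hg3 : 0 < g 3)
    (hh : ∀ k, 1 ≤ k → 0 < h k) (hcond : g 2 ^ 2 > g 3) (m : ℕ) :
    (g 2 * SsumAux h (m+1)) ^ 2 > EEAux g h m := by
  induction m with
  | zero =>
      have h1 : 0 < h 1 := hh 1 (by omega)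
      have : SsumAux h 1 = h 1 := by simp [SsumAux]
      rw [this, EEAux]
      positivity
  | succ m ih =>
      have hS2 : SsumAux h (m+2) = SsumAux h (m+1) + h (m+2) := by
        rw [SsumAux, Finset.sum_range_succ]; rfl
      have hS1 : SsumAux h (m+1) = SsumAux h m + h (m+1) := by
        rw [SsumAux, Finset.sum_range_succ]; rfl
      have hE : EEAux g h (m+1) =
          EEAux g h m + h (m+2) * (g 2 ^ 2 * SsumAux h m + g 3 * h (m+1)) := by rw [EEAux]
      have h1 : 0 < h (m+1) := hh (m+1) (by omega)
      have h2 : 0 < h (m+2) := hh (m+2) (by omega)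
      have hSm : 0 ≤ SsumAux h m := SsumAux_nonneg h hh m
      have hSm1 : 0 ≤ SsumAux h (m+1) := SsumAux_nonneg h hh (m+1)
      rw [hS2, hE]
      nlinarith [ih, mul_pos (mul_pos h2 h1) (sub_pos.2 hcond),
        mul_nonneg (mul_nonneg h2.le (sq_nonneg (g 2))) hSm1,
        mul_pos (mul_pos h2 h2) (pow_pos hg2 2), hS1]


/-- If `g(2)² > g(3)` then the top coefficients of `P_n^{g,h}` satisfy
`a_{n,n-1}² > a_{n,n-2} · a_{n,n}` for all `n ≥ 2`. -/
theorem top_log_concavity (g h : ℕ → ℝ) (hg1 : g 1 = 1) (hh1 : h 1 = 1)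
    (hgpos : ∀ k, 1 ≤ k → 0 < g k) (hhpos : ∀ k, 1 ≤ k → 0 < h k)
    (hcond : g 2 ^ 2 > g 3) (n : ℕ) (hn : 2 ≤ n) :
    ((Ppoly g h n).coeff (n - 1)) ^ 2 >
      (Ppoly g h n).coeff (n - 2) * (Ppoly g h n).coeff n := by
  obtain ⟨m, rfl⟩ : ∃ m, n = m + 2 := ⟨n - 2, by omega⟩
  have e1 : m + 2 - 1 = m + 1 := by omega
  have e2 : m + 2 - 2 = m := by omega
  rw [e1, e2]
  have hb : (Ppoly g h (m+2)).coeff (m+1) = g 2 * SsumAux h (m+1) * ccAux h (m+2) :=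
    ppoly_coeff_sub1 g h hg1 hhpos (m+1)
  rw [hb, ppoly_coeff_sub2 g h hg1 hhpos, ppoly_coeff_top g h hg1]
  have hcc : 0 < ccAux h (m+2) := ccAux_pos h hhpos (m+2)
  have hkey := key_ineq g h (hgpos 2 (by omega)) (hgpos 3 (by omega)) hhpos hcond m
  calc EEAux g h m * ccAux h (m+2) * ccAux h (m+2)
      < (g 2 * SsumAux h (m+1)) ^ 2 * (ccAux h (m+2) * ccAux h (m+2)) := by
        nlinarith [hkey, mul_pos hcc hcc]
    _ = (g 2 * SsumAux h (m+1) * ccAux h (m+2)) ^ 2 := by ring
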